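/- Let n > 1 be odd and k, ℓ : ZMod n. Then the map from Fin n to ZMod n sending i to w i is injective if and only if k − ℓ is a unit of ZMod n (equivalently, the integer represented by k − ℓ is coprime to n). In other words, the alternating walk starting at the isolated vertex of F_k visits n distinct vertices (contains no repeated vertex) exactly when k − ℓ is coprime to n. -/

import Mathlib

/-- The alternating walk sequence in `F k ⊔ F ℓ` starting from the isolated
vertex `2⁻¹ * k` of `F k`: edges alternate between `F ℓ` and `F k`. -/
def walkSeq (n : ℕ) (k ℓ : ZMod n) : ℕ → ZMod n
  | 0 => 2⁻¹ * k
  | i + 1 => if Even i then ℓ - walkSeq n k ℓ i else k - walkSeq n k ℓ i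

theorem stmt_6 (n : ℕ) (hn : 1 < n) (hodd : Odd n) (k ℓ : ZMod n) :
    Function.Injective (fun i : Fin n => walkSeq n k ℓ i) ↔ IsUnit (k - ℓ) := by
  have hnz : NeZero n := ⟨by omega⟩
  have h2 : IsUnit (2 : ZMod n) := by
    have : ((2 : ℕ) : ZMod n) = (2 : ZMod n) := by push_cast; ring
    rw [← this, ZMod.isUnit_iff_coprime]
    simpa using hodd
  have h21 : (2 : ZMod n) * 2⁻¹ = 1 := ZMod.mul_inv_of_unit 2 h2
  set d := k - ℓ with hd
  set c : ℕ → ZMod n := fun i =>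
    if Even i then ((i / 2 : ℕ) : ZMod n) else -(((i / 2 : ℕ) : ZMod n) + 1) with hc
  have hw : ∀ i, walkSeq n k ℓ i = 2⁻¹ * k + c i * d := by
    intro i
    induction i with
    | zero => simp [walkSeq, hc]
    | succ i ih =>
      rcases Nat.even_or_odd i with he | ho
      · have h1 : ¬ Even (i + 1) := by simp [Nat.even_add_one, he]
        have h2' : (i + 1) / 2 = i / 2 := by obtain ⟨m, hm⟩ := he; omega
        simp only [walkSeq, if_pos he, ih, hc, if_neg h1, h2']
        linear_combination (-k) * h21
      · have h1 : Even (i + 1) := by simpa [Nat.even_add_one] using ho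
        have h2' : (i + 1) / 2 = i / 2 + 1 := by obtain ⟨m, hm⟩ := ho; omega
        have hne : ¬ Even i := Nat.not_even_iff_odd.mpr ho
        simp only [walkSeq, if_neg hne, ih, hc, if_pos h1, h2']
        push_cast
        linear_combination (-k) * h21
  -- 2 * c i equals i (for even i) or -(i+1) (for odd i)
  have h2c : ∀ i : ℕ, (2 : ZMod n) * c i =
      if Even i then ((i : ℕ) : ZMod n) else -(((i : ℕ) : ZMod n) + 1) := by
    intro i
    rcases Nat.even_or_odd i with he | ho
    · simp only [hc, if_pos he]
      obtain ⟨m, hm⟩ := he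
      have h' : i / 2 = m := by omega
      rw [h', hm]
      push_cast; ring
    · have hne : ¬ Even i := Nat.not_even_iff_odd.mpr ho
      simp only [hc, if_neg hne]
      obtain ⟨m, hm⟩ := ho
      have h' : i / 2 = m := by omega
      rw [h', hm]
      push_cast; ring
  -- the coefficient map is injective on Fin n
  have hcinj : ∀ i j : Fin n, c i = c j → i = j := by
    intro i j hij
    have h2ij : (2 : ZMod n) * c i = (2 : ZMod n) * c j := by rw [hij]
    rw [h2c, h2c] at h2ij
    have hvi : ((i : ℕ) : ZMod n).val = (i : ℕ) := ZMod.val_cast_of_lt i.isLt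
    have hvj : ((j : ℕ) : ZMod n).val = (j : ℕ) := ZMod.val_cast_of_lt j.isLt
    have natcast_inj : ((i : ℕ) : ZMod n) = ((j : ℕ) : ZMod n) → i = j := by
      intro h
      have := congrArg ZMod.val h
      rw [hvi, hvj] at this
      exact Fin.ext this
    have mixed : ∀ a b : Fin n, Even (a : ℕ) → ¬ Even (b : ℕ) →
        ((a : ℕ) : ZMod n) = -(((b : ℕ) : ZMod n) + 1) → False := by
      intro a b hea hob h
      have hz : (((a : ℕ) + (b : ℕ) + 1 : ℕ) : ZMod n) = 0 := by
        push_cast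
        linear_combination h
      rw [ZMod.natCast_eq_zero_iff] at hz
      obtain ⟨m, hm⟩ := hz
      have ha := a.isLt
      have hb := b.isLt
      obtain ⟨s, hs⟩ := hodd
      obtain ⟨u, hu⟩ := hea
      rw [Nat.even_iff] at hob
      have hb2 : (b : ℕ) % 2 = 1 := by omega
      -- a + b + 1 is even, n is odd, and a + b + 1 = n * m with 0 < a+b+1 < 2n
      rcases Nat.lt_or_ge m 2 with hm2 | hm2
      · interval_cases m <;> omega
      · nlinarith [hm, hm2, ha, hb]
    rcases Nat.even_or_odd (i : ℕ) with hei | hoi <;>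
      rcases Nat.even_or_odd (j : ℕ) with hej | hoj
    · rw [if_pos hei, if_pos hej] at h2ij
      exact natcast_inj h2ij
    · rw [if_pos hei, if_neg (Nat.not_even_iff_odd.mpr hoj)] at h2ij
      exact absurd h2ij (fun h => mixed i j hei (Nat.not_even_iff_odd.mpr hoj) h)
    · rw [if_neg (Nat.not_even_iff_odd.mpr hoi), if_pos hej] at h2ij
      exact absurd h2ij.symm
        (fun h => mixed j i hej (Nat.not_even_iff_odd.mpr hoi) h)
    · rw [if_neg (Nat.not_even_iff_odd.mpr hoi),
        if_neg (Nat.not_even_iff_odd.mpr hoj)] at h2ij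
      have : ((i : ℕ) : ZMod n) = ((j : ℕ) : ZMod n) := by linear_combination -h2ij
      exact natcast_inj this
  constructor
  · intro hinj
    have hcard : Fintype.card (Fin n) = Fintype.card (ZMod n) := by
      simp [ZMod.card]
    have hbij : Function.Bijective (fun i : Fin n => walkSeq n k ℓ i) :=
      (Fintype.bijective_iff_injective_and_card _).2 ⟨hinj, hcard⟩
    obtain ⟨i, hi⟩ := hbij.2 (2⁻¹ * k + 1)
    have : c i * d = 1 := by
      have h' : walkSeq n k ℓ i = 2⁻¹ * k + 1 := hi
      rw [hw] at h'
      linear_combination h'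
    exact IsUnit.of_mul_eq_one (c i) (by linear_combination this)
  · intro hu
    intro i j hij
    have hij' : walkSeq n k ℓ i = walkSeq n k ℓ j := hij
    rw [hw, hw] at hij'
    have hcd : d * c (i : ℕ) = d * c (j : ℕ) := by linear_combination hij'
    have := hu.mul_left_cancel hcd
    exact hcinj i j this
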